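/- Let C be an (n,k) linear code over GF(q^m) with rank weight distribution (A_i), and let d' be the minimum rank distance of C^⊥. If 0 ≤ ν < d', then Σ_{i=0}^{n-ν} [n-i choose ν]_q A_i = q^{m(k-ν)} [n choose ν]_q. -/

import Mathlib

noncomputable section

/-- `alphaQ q a u = ∏_{i=0}^{u-1} (q^a - q^i)`, with integer exponent `a`. -/
def alphaQ (q : ℚ) (a : ℤ) (u : ℕ) : ℚ :=
  ∏ i ∈ Finset.range u, (q ^ a - q ^ (i : ℤ))

/-- The Gaussian binomial `[a choose b]_q = α(a,b)/α(b,b)`. -/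
def gaussQ (q : ℚ) (a b : ℕ) : ℚ := alphaQ q a b / alphaQ q b b

/-- `sig l = l(l-1)/2`. -/
def sig (l : ℕ) : ℕ := l * (l - 1) / 2

/-- The rank weight of a vector with coordinates in `Fqm`: the dimension over the base
field `Fq` of the `Fq`-linear span of its coordinates. -/
def rankWeight (Fq : Type*) [Field Fq] {Fqm : Type*} [Field Fqm] [Algebra Fq Fqm]
    {n : ℕ} (x : Fin n → Fqm) : ℕ :=
  Module.finrank Fq (Submodule.span Fq (Set.range x))

/-- `Fprod q ν s = ∏_{j<ν} (q^s - q^j)` in ℚ with ℕ-powers. -/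
def Fprod (q ν s : ℕ) : ℚ := ∏ j ∈ Finset.range ν, ((q:ℚ)^s - (q:ℚ)^j)

lemma alphaQ_nat (q ν s : ℕ) : alphaQ (q:ℚ) (s : ℤ) ν = Fprod q ν s := by
  unfold alphaQ Fprod
  refine Finset.prod_congr rfl fun j _ => ?_
  rw [zpow_natCast, zpow_natCast]

lemma gaussQ_eq (q s ν : ℕ) : gaussQ q s ν = Fprod q ν s / Fprod q ν ν := by
  rw [gaussQ, alphaQ_nat, alphaQ_nat]

lemma Fprod_ne_zero {q : ℕ} (hq : 1 < q) (ν : ℕ) : Fprod q ν ν ≠ 0 := by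
  refine Finset.prod_ne_zero_iff.2 fun j hj => sub_ne_zero.2 (ne_of_gt ?_)
  exact pow_lt_pow_right₀ (by exact_mod_cast hq) (Finset.mem_range.1 hj)

lemma Fprod_zero {q ν s : ℕ} (h : s < ν) : Fprod q ν s = 0 :=
  Finset.prod_eq_zero (Finset.mem_range.2 h) (by simp)

lemma cast_prod_eq_Fprod {q : ℕ} (hq : 1 ≤ q) (ν s : ℕ) :
    ((∏ j ∈ Finset.range ν, (q^s - q^j) : ℕ) : ℚ) = Fprod q ν s := by
  rcases le_or_gt ν s with h | h
  · rw [Nat.cast_prod]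
    refine Finset.prod_congr rfl fun j hj => ?_
    rw [Nat.cast_sub (Nat.pow_le_pow_right hq (le_trans (Nat.le_of_lt_succ
      (Nat.lt_succ_of_lt (Finset.mem_range.1 hj))) h))]
    push_cast; ring
  · rw [Finset.prod_eq_zero (Finset.mem_range.2 h) (by simp), Fprod_zero h, Nat.cast_zero]

section Pairing
variable {Fq Fqm : Type*} [Field Fq] [Field Fqm] [Algebra Fq Fqm] {n : ℕ}

lemma rankWeight_le (c : Fin n → Fqm) : rankWeight Fq c ≤ n := by
  have h := LinearMap.finrank_range_add_finrank_ker (Fintype.linearCombination Fq c)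
  rw [Fintype.range_linearCombination, Module.finrank_pi] at h
  simp only [Fintype.card_fin] at h
  unfold rankWeight; omega

lemma finrank_ker_lc (c : Fin n → Fqm) :
    Module.finrank Fq (LinearMap.ker (Fintype.linearCombination Fq c)) =
      n - rankWeight Fq c := by
  have h := LinearMap.finrank_range_add_finrank_ker (Fintype.linearCombination Fq c)
  rw [Fintype.range_linearCombination, Module.finrank_pi] at h
  simp only [Fintype.card_fin] at h
  unfold rankWeight at *; omega

lemma indep_algebraMap [FiniteDimensional Fq Fqm] {ν : ℕ} {y : Fin ν → (Fin n → Fq)}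
    (hy : LinearIndependent Fq y) :
    LinearIndependent Fqm (fun j => fun t => algebraMap Fq Fqm (y j t)) := by
  rw [Fintype.linearIndependent_iff] at hy ⊢
  intro g hg j
  rw [← Module.forall_dual_apply_eq_zero_iff Fq]
  intro f
  have h2 : ∀ t, ∑ i, (y i t) • g i = 0 := by
    intro t
    have := congrFun hg t
    simp only [Finset.sum_apply, Pi.smul_apply, smul_eq_mul, Pi.zero_apply] at this
    rw [← this]
    refine Finset.sum_congr rfl fun i _ => ?_
    rw [Algebra.smul_def, mul_comm]
  have h3 : ∑ i, (fun i => f (g i)) i • y i = 0 := by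
    funext t
    simp only [Finset.sum_apply, Pi.smul_apply, smul_eq_mul, Pi.zero_apply]
    have := congrArg f (h2 t)
    rw [map_sum, map_zero] at this
    rw [← this]
    refine Finset.sum_congr rfl fun i _ => ?_
    rw [map_smul, smul_eq_mul, mul_comm]
  exact hy _ h3 j

end Pairing

theorem rank_distribution_binomial_moment_below_dual_distance
    (Fq Fqm : Type*) [Field Fq] [Field Fqm] [Fintype Fq] [Fintype Fqm] [Algebra Fq Fqm]
    (q m n k : ℕ) (hq : Fintype.card Fq = q) (hm : Module.finrank Fq Fqm = m)
    (C : Submodule Fqm (Fin n → Fqm)) (hk : Module.finrank Fqm C = k)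
    (A : ℕ → ℕ)
    (hA : ∀ i, A i = Nat.card {c : Fin n → Fqm // c ∈ C ∧ rankWeight Fq c = i})
    (ν : ℕ)
    (hν : ν < sInf {i : ℕ | ∃ u : Fin n → Fqm,
        (∀ v ∈ C, ∑ t, u t * v t = 0) ∧ u ≠ 0 ∧ rankWeight Fq u = i}) :
    ∑ i ∈ Finset.range (n - ν + 1), gaussQ q (n - i) ν * (A i : ℚ) =
      (q : ℚ) ^ ((m : ℤ) * ((k : ℤ) - ν)) * gaussQ q n ν := by
  classical
  have hq2 : 1 < q := hq ▸ Fintype.one_lt_card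
  set S := {i : ℕ | ∃ u : Fin n → Fqm,
      (∀ v ∈ C, ∑ t, u t * v t = 0) ∧ u ≠ 0 ∧ rankWeight Fq u = i} with hS
  by_cases hνn : ν ≤ n
  swap
  · have h0 : n - ν = 0 := by omega
    have hg : gaussQ q n ν = 0 := by
      rw [gaussQ_eq, Fprod_zero (show n < ν by omega)]
      simp
    rw [h0]
    simp only [zero_add, Finset.sum_range_one, Nat.sub_zero]
    rw [hg, zero_mul, mul_zero]
  -- main case
  haveI : FiniteDimensional Fq Fqm := Module.Finite.of_finite
  haveI : Fintype C := Fintype.ofFinite _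
  -- the evaluation maps
  set Φ : (Fin ν → (Fin n → Fq)) → (C →ₗ[Fqm] (Fin ν → Fqm)) := fun y =>
    LinearMap.pi fun j =>
      (Fintype.linearCombination Fqm (fun t => algebraMap Fq Fqm (y j t))).comp C.subtype
    with hΦdef
  have hΦ : ∀ y (c : C) j, Φ y c j = ∑ t, algebraMap Fq Fqm (y j t) * (c : Fin n → Fqm) t := by
    intro y c j
    simp only [hΦdef, LinearMap.pi_apply, LinearMap.comp_apply, Submodule.coe_subtype,
      Fintype.linearCombination_apply, smul_eq_mul]
    exact Finset.sum_congr rfl fun t _ => mul_comm _ _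
  have hsurj : ∀ y, LinearIndependent Fq y → Function.Surjective (Φ y) := by
    intro y hy
    by_contra hns
    rw [← LinearMap.range_eq_top] at hns
    obtain ⟨φ, φ0, hker⟩ := Submodule.exists_le_ker_of_lt_top _ (lt_top_iff_ne_top.2 hns)
    set lam : Fin ν → Fqm := fun j => φ (Pi.single j 1) with hlam
    set u : Fin n → Fqm := fun t => ∑ j, lam j * algebraMap Fq Fqm (y j t) with hu
    have hphi : ∀ x : Fin ν → Fqm, φ x = ∑ j, x j * lam j := by
      intro x
      rw [LinearMap.pi_apply_eq_sum_univ φ x]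
      refine Finset.sum_congr rfl fun j _ => ?_
      rw [smul_eq_mul]
      congr 1
      show (φ fun j1 => if j = j1 then 1 else 0) = φ (Pi.single j 1)
      congr 1
      funext j1
      simp [Pi.single_apply, eq_comm]
    have hudual : ∀ v ∈ C, ∑ t, u t * v t = 0 := by
      intro v hv
      have h1 : φ (Φ y ⟨v, hv⟩) = 0 := LinearMap.mem_ker.mp (hker ⟨⟨v, hv⟩, rfl⟩)
      rw [hphi] at h1
      calc ∑ t, u t * v t
          = ∑ t, ∑ j, lam j * algebraMap Fq Fqm (y j t) * v t := by
            refine Finset.sum_congr rfl fun t _ => ?_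
            rw [hu]; rw [Finset.sum_mul]
        _ = ∑ j, ∑ t, lam j * algebraMap Fq Fqm (y j t) * v t := Finset.sum_comm
        _ = ∑ j, (Φ y ⟨v, hv⟩) j * lam j := by
            refine Finset.sum_congr rfl fun j _ => ?_
            rw [hΦ, Finset.sum_mul]
            exact Finset.sum_congr rfl fun t _ => by ring
        _ = 0 := h1
    have hune : rankWeight Fq u ≤ ν := by
      have hspan : Submodule.span Fq (Set.range u) ≤ Submodule.span Fq (Set.range lam) := by
        rw [Submodule.span_le]
        rintro _ ⟨t, rfl⟩
        have : u t = ∑ j, y j t • lam j := by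
          rw [hu]; exact Finset.sum_congr rfl fun j _ => by rw [Algebra.smul_def, mul_comm]
        rw [this]
        exact Submodule.sum_mem _ fun j _ =>
          Submodule.smul_mem _ _ (Submodule.subset_span ⟨j, rfl⟩)
      have h2 : Module.finrank Fq (Submodule.span Fq (Set.range lam)) ≤ ν := by
        refine le_trans (finrank_span_le_card _) ?_
        rw [Set.toFinset_range]
        exact le_trans Finset.card_image_le (by simp)
      exact le_trans (Submodule.finrank_mono hspan) h2
    by_cases hu0 : u = 0
    · have hli := indep_algebraMap (Fq := Fq) (Fqm := Fqm) hy
      rw [Fintype.linearIndependent_iff] at hli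
      have hlam0 : ∀ j, lam j = 0 := by
        refine hli lam ?_
        funext t
        have h4 := congrFun hu0 t
        simp only [hu, Pi.zero_apply] at h4
        simp only [Finset.sum_apply, Pi.smul_apply, smul_eq_mul, Pi.zero_apply]
        exact h4
      exact φ0 (LinearMap.ext fun x => by rw [hphi]; simp [hlam0])
    · have hmem : rankWeight Fq u ∈ S := ⟨u, hudual, hu0, rfl⟩
      have := Nat.sInf_le hmem
      omega
  have hkerrank : ∀ y, LinearIndependent Fq y →
      ν ≤ k ∧ Module.finrank Fqm (LinearMap.ker (Φ y)) = k - ν := by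
    intro y hy
    have h1 := LinearMap.finrank_range_add_finrank_ker (Φ y)
    rw [LinearMap.range_eq_top.2 (hsurj y hy), finrank_top, Module.finrank_pi, hk] at h1
    simp only [Fintype.card_fin] at h1
    constructor <;> omega
  obtain ⟨y₀, hy₀⟩ : ∃ y : Fin ν → (Fin n → Fq), LinearIndependent Fq y :=
    ⟨fun j => Pi.basisFun Fq (Fin n) (Fin.castLE hνn j),
      (Pi.basisFun Fq (Fin n)).linearIndependent.comp _ (Fin.castLE_injective hνn)⟩
  have hνk : ν ≤ k := (hkerrank y₀ hy₀).1
  have cardFqm : Fintype.card Fqm = q ^ m := by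
    rw [Module.card_eq_pow_finrank (K := Fq), hq, hm]
  have count2 : ∀ y, LinearIndependent Fq y →
      ((Finset.univ.filter fun c : C => Φ y c = 0).card : ℚ) = (q:ℚ) ^ (m*(k-ν)) := by
    intro y hy
    have e1 : (Finset.univ.filter fun c : C => Φ y c = 0).card
        = Fintype.card (LinearMap.ker (Φ y)) := by
      rw [Fintype.card_subtype]
      congr 1
      ext c
      simp [LinearMap.mem_ker]
    rw [e1, Module.card_eq_pow_finrank (K := Fqm), cardFqm, (hkerrank y hy).2, ← pow_mul]
    norm_cast
  have count1 : ∀ c : C, ((Finset.univ.filter fun y : Fin ν → (Fin n → Fq) =>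
      LinearIndependent Fq y ∧ Φ y c = 0).card : ℚ)
        = Fprod q ν (n - rankWeight Fq (c : Fin n → Fqm)) := by
    intro c
    set s := n - rankWeight Fq (c : Fin n → Fqm) with hs
    set Kc := LinearMap.ker (Fintype.linearCombination Fq ((c : Fin n → Fqm))) with hKcdef
    have hKc : Module.finrank Fq Kc = s := finrank_ker_lc _
    have hcond : ∀ y : Fin ν → Fin n → Fq, (Φ y c = 0 ↔ ∀ j, y j ∈ Kc) := by
      intro y
      rw [funext_iff]
      refine forall_congr' fun j => ?_
      rw [hΦ, LinearMap.mem_ker, Fintype.linearCombination_apply]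
      have : (∑ t, algebraMap Fq Fqm (y j t) * (c : Fin n → Fqm) t)
          = ∑ t, y j t • (c : Fin n → Fqm) t :=
        Finset.sum_congr rfl fun t _ => (Algebra.smul_def _ _).symm
      rw [this]
      simp
    have e : {y : Fin ν → Fin n → Fq // LinearIndependent Fq y ∧ Φ y c = 0}
        ≃ {z : Fin ν → Kc // LinearIndependent Fq z} :=
      { toFun := fun y => ⟨fun j => ⟨y.1 j, ((hcond y.1).1 y.2.2) j⟩, by
          have := y.2.1
          rw [← LinearMap.linearIndependent_iff (Kc.subtype) (Submodule.ker_subtype Kc)]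
          exact this⟩
        invFun := fun z => ⟨fun j => (z.1 j : Fin n → Fq),
          ⟨(LinearMap.linearIndependent_iff (Kc.subtype) (Submodule.ker_subtype Kc)).2 z.2,
            (hcond _).2 fun j => (z.1 j).2⟩⟩
        left_inv := fun y => rfl
        right_inv := fun z => rfl }
    rw [show (Finset.univ.filter fun y : Fin ν → (Fin n → Fq) =>
        LinearIndependent Fq y ∧ Φ y c = 0).card
      = Fintype.card {y : Fin ν → Fin n → Fq // LinearIndependent Fq y ∧ Φ y c = 0} from
        (Fintype.card_subtype _).symm, Fintype.card_congr e]
    rcases le_or_gt ν s with h | h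
    · have hcard := card_linearIndependent (K := Fq) (V := Kc) (k := ν) (by rw [hKc]; exact h)
      rw [Nat.card_eq_fintype_card] at hcard
      rw [hcard, hq, hKc, Fin.prod_univ_eq_prod_range (fun j => q ^ s - q ^ j) ν]
      exact cast_prod_eq_Fprod (by omega) ν s
    · haveI : IsEmpty {z : Fin ν → Kc // LinearIndependent Fq z} := by
        refine ⟨fun z => ?_⟩
        have := z.2.fintype_card_le_finrank
        rw [Fintype.card_fin, hKc] at this
        omega
      rw [Fintype.card_eq_zero, Fprod_zero h, Nat.cast_zero]
  have hcount_indep : ((Finset.univ.filter fun y : Fin ν → Fin n → Fq =>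
      LinearIndependent Fq y).card : ℚ) = Fprod q ν n := by
    rw [show (Finset.univ.filter fun y : Fin ν → Fin n → Fq => LinearIndependent Fq y).card
      = Fintype.card {y : Fin ν → Fin n → Fq // LinearIndependent Fq y} from
        (Fintype.card_subtype _).symm]
    have hcard := card_linearIndependent (K := Fq) (V := Fin n → Fq) (k := ν)
      (by rw [Module.finrank_pi]; simpa)
    rw [Nat.card_eq_fintype_card] at hcard
    rw [hcard, hq, Module.finrank_pi]
    simp only [Fintype.card_fin]
    rw [Fin.prod_univ_eq_prod_range (fun j => q ^ n - q ^ j) ν]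
    exact cast_prod_eq_Fprod (by omega) ν n
  have key : ∑ c : C, Fprod q ν (n - rankWeight Fq (c : Fin n → Fqm))
      = (q:ℚ)^(m*(k-ν)) * Fprod q ν n := by
    have step1 : ∀ c : C, Fprod q ν (n - rankWeight Fq (c : Fin n → Fqm))
        = ∑ y : Fin ν → Fin n → Fq,
            (if LinearIndependent Fq y ∧ Φ y c = 0 then (1:ℚ) else 0) := by
      intro c
      rw [Finset.sum_boole]
      exact (count1 c).symm
    rw [Finset.sum_congr rfl (fun c _ => step1 c), Finset.sum_comm]
    have step2 : ∀ y : Fin ν → Fin n → Fq,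
        (∑ c : C, if LinearIndependent Fq y ∧ Φ y c = 0 then (1:ℚ) else 0)
          = if LinearIndependent Fq y then (q:ℚ)^(m*(k-ν)) else 0 := by
      intro y
      by_cases hy : LinearIndependent Fq y
      · simp only [hy, true_and, if_true]
        rw [Finset.sum_boole]
        exact count2 y hy
      · simp [hy]
    rw [Finset.sum_congr rfl (fun y _ => step2 y), Finset.sum_ite, Finset.sum_const,
      Finset.sum_const_zero, add_zero, nsmul_eq_mul, hcount_indep, mul_comm]
  have group : ∑ c : C, Fprod q ν (n - rankWeight Fq (c : Fin n → Fqm))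
      = ∑ i ∈ Finset.range (n+1), (A i : ℚ) * Fprod q ν (n - i) := by
    rw [← Finset.sum_fiberwise_of_maps_to
      (g := fun c : C => rankWeight Fq (c : Fin n → Fqm)) (t := Finset.range (n+1))
      (fun c _ => Finset.mem_range.2 (Nat.lt_succ_of_le (rankWeight_le _)))
      (f := fun c : C => Fprod q ν (n - rankWeight Fq (c : Fin n → Fqm)))]
    refine Finset.sum_congr rfl fun i _ => ?_
    rw [Finset.sum_congr rfl (fun c hc => by
      rw [(Finset.mem_filter.1 hc).2] :
        ∀ c ∈ Finset.univ.filter (fun c : C => rankWeight Fq (c : Fin n → Fqm) = i),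
          Fprod q ν (n - rankWeight Fq (c : Fin n → Fqm)) = Fprod q ν (n - i)),
      Finset.sum_const, nsmul_eq_mul]
    congr 1
    have hAi : (Finset.univ.filter (fun c : C => rankWeight Fq (c : Fin n → Fqm) = i)).card
        = A i := by
      rw [hA i, Nat.card_eq_fintype_card,
        show (Finset.univ.filter (fun c : C => rankWeight Fq (c : Fin n → Fqm) = i)).card
          = Fintype.card {c : C // rankWeight Fq (c : Fin n → Fqm) = i} from
            (Fintype.card_subtype _).symm]
      exact Fintype.card_congr
        { toFun := fun c => ⟨c.1.1, c.1.2, c.2⟩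
          invFun := fun c => ⟨⟨c.1, c.2.1⟩, c.2.2⟩
          left_inv := fun c => rfl
          right_inv := fun c => rfl }
    rw [hAi]
  have hextend : ∑ i ∈ Finset.range (n+1), (A i : ℚ) * Fprod q ν (n - i)
      = ∑ i ∈ Finset.range (n-ν+1), (A i : ℚ) * Fprod q ν (n - i) := by
    refine (Finset.sum_subset (Finset.range_subset_range.2 (by omega)) ?_).symm
    intro i hi1 hi2
    rw [Finset.mem_range] at hi1 hi2
    rw [Fprod_zero (by omega), mul_zero]
  have hFν := Fprod_ne_zero hq2 ν
  have hzpow : (q : ℚ) ^ ((m : ℤ) * ((k : ℤ) - ν)) = (q:ℚ)^(m*(k-ν)) := by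
    rw [show ((m : ℤ) * ((k : ℤ) - ν)) = ((m*(k-ν) : ℕ) : ℤ) by
      push_cast [Nat.cast_sub hνk]; ring]
    rw [zpow_natCast]
  calc ∑ i ∈ Finset.range (n - ν + 1), gaussQ q (n - i) ν * (A i : ℚ)
      = ∑ i ∈ Finset.range (n - ν + 1), ((A i : ℚ) * Fprod q ν (n - i)) / Fprod q ν ν := by
        refine Finset.sum_congr rfl fun i _ => ?_
        rw [gaussQ_eq]; ring
    _ = (∑ i ∈ Finset.range (n - ν + 1), (A i : ℚ) * Fprod q ν (n - i)) / Fprod q ν ν := by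
        rw [Finset.sum_div]
    _ = ((q:ℚ)^(m*(k-ν)) * Fprod q ν n) / Fprod q ν ν := by
        rw [← hextend, ← group, key]
    _ = (q : ℚ) ^ ((m : ℤ) * ((k : ℤ) - ν)) * gaussQ q n ν := by
        rw [hzpow, gaussQ_eq]; ring
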